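/- In a gs-monoidal category, if f : A → X is a normalized morphism (i.e. f∘dom(f) = f), then its domain dom(f) : A → A is a functional morphism, i.e. Δ_A∘dom(f) = (dom(f)⊗dom(f))∘Δ_A. -/

import Mathlib

open CategoryTheory MonoidalCategory

universe w v u v' u'

/-- A gs-monoidal category: a symmetric monoidal category in which every object carries a
commutative comonoid structure (copy and discard), compatible with tensor products. -/
class GSCat (C : Type u) [Category.{v} C] [MonoidalCategory C] [SymmetricCategory C] where
  copy : ∀ A : C, A ⟶ A ⊗ A
  discard : ∀ A : C, A ⟶ 𝟙_ C
  copy_assoc : ∀ A : C, copy A ≫ (copy A ▷ A) ≫ (α_ A A A).hom = copy A ≫ (A ◁ copy A)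
  copy_comm : ∀ A : C, copy A ≫ (β_ A A).hom = copy A
  copy_counit_left : ∀ A : C, copy A ≫ (discard A ▷ A) ≫ (λ_ A).hom = 𝟙 A
  copy_counit_right : ∀ A : C, copy A ≫ (A ◁ discard A) ≫ (ρ_ A).hom = 𝟙 A
  copy_tensor : ∀ A X : C, copy (A ⊗ X) = (copy A ⊗ₘ copy X) ≫ tensorμ A A X X
  discard_tensor : ∀ A X : C, discard (A ⊗ X) = (discard A ⊗ₘ discard X) ≫ (λ_ (𝟙_ C)).hom
  discard_unit : discard (𝟙_ C) = 𝟙 (𝟙_ C)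

variable {C : Type u} [Category.{v} C] [MonoidalCategory C] [SymmetricCategory C] [GSCat C]

/-- The domain `dom(f) = ρ_A ∘ (id_A ⊗ (ε_X ∘ f)) ∘ Δ_A` of a morphism `f : A ⟶ X`. -/
def gsDom {A X : C} (f : A ⟶ X) : A ⟶ A :=
  GSCat.copy A ≫ (A ◁ (f ≫ GSCat.discard X)) ≫ (ρ_ A).hom

/-- A morphism is normalized if `f ∘ dom(f) = f`. -/
def GsNormalized {A X : C} (f : A ⟶ X) : Prop := gsDom f ≫ f = f

/-- A morphism is functional if `Δ_X ∘ f = (f ⊗ f) ∘ Δ_A`. -/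
def GsFunctional {A X : C} (f : A ⟶ X) : Prop :=
  f ≫ GSCat.copy X = GSCat.copy A ≫ (f ⊗ₘ f)

/-- A morphism is total if `ε_X ∘ f = ε_A`. -/
def GsTotal {A X : C} (f : A ⟶ X) : Prop := f ≫ GSCat.discard X = GSCat.discard A

/-- `f ⊒ g` : `f` agrees with `g` on the domain of `g`, i.e. `f ∘ dom(g) = g`. -/
def GsRestrict {A X : C} (f g : A ⟶ X) : Prop := gsDom g ≫ f = g

/-- A gs-monoidal category is normalized if all of its morphisms are normalized. -/
class GsNormalizedCat (C : Type u) [Category.{v} C] [MonoidalCategory C]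
    [SymmetricCategory C] [GSCat C] : Prop where
  norm : ∀ {A X : C} (f : A ⟶ X), GsNormalized f


/-- Auxiliary (i): copy commutes with `gsDom f` whiskered on the right leg. -/
lemma gs_copy_whiskerLeft_dom {A X : C} (f : A ⟶ X) :
    GSCat.copy A ≫ (A ◁ gsDom f) = gsDom f ≫ GSCat.copy A := by
  set g : A ⟶ 𝟙_ C := f ≫ GSCat.discard X with hg
  have lhs : GSCat.copy A ≫ (A ◁ gsDom f)
      = GSCat.copy A ≫ (GSCat.copy A ▷ A) ≫ ((A ⊗ A) ◁ g) ≫ (ρ_ (A ⊗ A)).hom := by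
    rw [gsDom, ← hg]
    rw [MonoidalCategory.whiskerLeft_comp, MonoidalCategory.whiskerLeft_comp]
    slice_lhs 1 2 => rw [← GSCat.copy_assoc]
    simp only [Category.assoc]
    rw [← associator_naturality_right_assoc, whiskerLeft_rightUnitor, Iso.hom_inv_id_assoc]
  have rhs : gsDom f ≫ GSCat.copy A
      = GSCat.copy A ≫ (GSCat.copy A ▷ A) ≫ ((A ⊗ A) ◁ g) ≫ (ρ_ (A ⊗ A)).hom := by
    rw [gsDom, ← hg]
    simp only [Category.assoc]
    rw [← rightUnitor_naturality, ← whisker_exchange_assoc]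
  rw [lhs, rhs]

/-- Auxiliary (ii): copy commutes with `gsDom f` whiskered on the left leg. -/
lemma gs_copy_whiskerRight_dom {A X : C} (f : A ⟶ X) :
    GSCat.copy A ≫ (gsDom f ▷ A) = gsDom f ≫ GSCat.copy A := by
  conv_lhs => rw [← GSCat.copy_comm A]
  rw [Category.assoc, ← BraidedCategory.braiding_naturality_right,
    ← Category.assoc, gs_copy_whiskerLeft_dom, Category.assoc, GSCat.copy_comm]

/-- Auxiliary (iii): the domain of a normalized morphism is idempotent. -/
lemma gs_dom_idem {A X : C} (f : A ⟶ X) (hf : GsNormalized f) :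
    gsDom f ≫ gsDom f = gsDom f := by
  have hdg : gsDom f ≫ f ≫ GSCat.discard X = f ≫ GSCat.discard X := by
    rw [← Category.assoc, hf]
  have step : gsDom f ≫ gsDom f
      = (gsDom f ≫ GSCat.copy A) ≫ (A ◁ (f ≫ GSCat.discard X)) ≫ (ρ_ A).hom := by
    rw [gsDom]; simp only [Category.assoc]
  rw [step, ← gs_copy_whiskerLeft_dom, Category.assoc,
    ← MonoidalCategory.whiskerLeft_comp_assoc, hdg, ← gsDom]

/-- In a gs-monoidal category, the domain of a normalized morphism is
functional. -/
theorem domain_of_normalized_is_functional {A X : C} (f : A ⟶ X)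
    (hf : GsNormalized f) : GsFunctional (gsDom f) := by
  rw [GsFunctional, CategoryTheory.MonoidalCategory.tensorHom_def]
  rw [← Category.assoc, gs_copy_whiskerRight_dom, Category.assoc, gs_copy_whiskerLeft_dom,
    ← Category.assoc, gs_dom_idem f hf]
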